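/- Let h : {1,…,n} → ℤ be nondecreasing, let W_P ⊆ S_n be its stabilizer (so the P-blocks are the level sets of h), and let I_Q ⊆ {1,…,n−1} determine Q-blocks with block-reversal involution w_{Q,0} as above. Let w ∈ S_n be increasing on the P-blocks (i.e. w is the minimal-length representative of its coset wW_P, w ∈ W^P). Then the following are equivalent: (i) w(h) = h∘w⁻¹ is strictly Q-dominant, i.e. h(w⁻¹(i)) > h(w⁻¹(i+1)) for every i ∈ I_Q; (ii) the permutation w₁ := w_{Q,0}∘w is increasing on the P-blocks and w₁⁻¹ is increasing on the Q-blocks (i.e. w₁ ∈ W^P ∩ ^QW, so that wW_P = w_{Q,0}w₁W_P with w₁ ∈ W^P ∩ ^QW and w_{Q,0}w₁ ∈ W^P). This is, for the type-A Weyl groups occurring in the paper, the combinatorial content of the theorem that the irreducible component Z_{P,w} of the generalized Steinberg variety is contained in Z_{Q,P} if and only if w(h) is strictly Q-dominant for one (equivalently every) P-regular antidominant coweight h. -/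

import Mathlib

/-- One-step relation generating a standard-parabolic ("interval") equivalence relation on
`{0,…,n-1}` (0-based reindexing of `{1,…,n}`): `a ~ a+1` whenever `a ∈ I`. -/
def ParabolicStep (n : ℕ) (I : Set ℕ) (a b : Fin n) : Prop :=
  (a : ℕ) ∈ I ∧ (b : ℕ) = (a : ℕ) + 1

/-- The interval ("standard parabolic") equivalence relation on `Fin n` generated by `I`. -/
def ParabolicRel (n : ℕ) (I : Set ℕ) : Fin n → Fin n → Prop :=
  Relation.EqvGen (ParabolicStep n I)

private lemma parabolic_cross {n : ℕ} {I : Set ℕ} {k : ℕ} (hk : k ∉ I) :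
    ∀ {a b : Fin n}, ParabolicRel n I a b → ((a : ℕ) ≤ k ↔ (b : ℕ) ≤ k) := by
  intro a b hab
  induction hab with
  | rel a b hstep =>
      obtain ⟨haI, hb⟩ := hstep
      constructor
      · intro hak
        by_contra hbk
        have hak' : (a : ℕ) = k := by omega
        exact hk (hak' ▸ haI)
      · intro hbk; omega
  | refl a => exact Iff.rfl
  | symm a b _ ih => exact ih.symm
  | trans a b c _ _ ih1 ih2 => exact ih1.trans ih2

private lemma parabolic_mem_between {n : ℕ} {I : Set ℕ} {a b : Fin n}
    (hab : ParabolicRel n I a b) {k : ℕ} (h1 : (a : ℕ) ≤ k) (h2 : k < (b : ℕ)) : k ∈ I := by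
  by_contra hk
  have := parabolic_cross hk hab
  omega

/-- Wu, Theorem `theoremvarietyweight` in type A (combinatorial form): for a nondecreasing
`h : {1,…,n} → ℤ` with stabilizer `W_P`, a subset `I_Q` with block-reversal involution
`w_{Q,0}`, and `w ∈ W^P` (increasing on the `P`-blocks, i.e. the level sets of `h`), the
coweight `w(h) = h ∘ w⁻¹` is strictly `Q`-dominant if and only if `w₁ = w_{Q,0} ∘ w`
satisfies `w₁ ∈ W^P ∩ ^QW`. -/
theorem stmt1 (n : ℕ) (I : Set ℕ) (hI : ∀ i ∈ I, i + 1 < n)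
    (h : Fin n → ℤ) (hmono : Monotone h)
    (wQ0 : Equiv.Perm (Fin n))
    (hwQ0 : ∀ a : Fin n, ∃ u v : Fin n,
      (∀ b : Fin n, ParabolicRel n I a b ↔ (u ≤ b ∧ b ≤ v)) ∧
      ((wQ0 a : ℕ) + (a : ℕ) = (u : ℕ) + (v : ℕ)))
    (w : Equiv.Perm (Fin n))
    (hwP : ∀ a b : Fin n, a < b → h a = h b → w a < w b) :
    (∀ i j : Fin n, (i : ℕ) ∈ I → (j : ℕ) = (i : ℕ) + 1 → h (w⁻¹ j) < h (w⁻¹ i)) ↔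
      ((∀ a b : Fin n, a < b → h a = h b → (wQ0 * w) a < (wQ0 * w) b) ∧
       (∀ a b : Fin n, a < b → ParabolicRel n I a b → (wQ0 * w)⁻¹ a < (wQ0 * w)⁻¹ b)) := by
  -- block reversal is consistent across a block
  have hrev : ∀ a b : Fin n, ParabolicRel n I a b →
      (wQ0 a : ℕ) + (a : ℕ) = (wQ0 b : ℕ) + (b : ℕ) := by
    intro a b hab
    obtain ⟨u, v, iffa, ea⟩ := hwQ0 a
    obtain ⟨u', v', iffb, eb⟩ := hwQ0 b
    have hsame : ∀ c : Fin n, (u ≤ c ∧ c ≤ v) ↔ (u' ≤ c ∧ c ≤ v') := by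
      intro c
      rw [← iffa c, ← iffb c]
      exact ⟨fun hc => Relation.EqvGen.trans _ _ _ (Relation.EqvGen.symm _ _ hab) hc,
             fun hc => Relation.EqvGen.trans _ _ _ hab hc⟩
    have h1 : u ≤ a ∧ a ≤ v := (iffa a).mp (Relation.EqvGen.refl a)
    have h2 : u' ≤ b ∧ b ≤ v' := (iffb b).mp (Relation.EqvGen.refl b)
    have l1 := (hsame u).mp ⟨le_refl u, le_trans h1.1 h1.2⟩
    have l2 := (hsame u').mpr ⟨le_refl u', le_trans h2.1 h2.2⟩
    have l3 := (hsame v).mp ⟨le_trans h1.1 h1.2, le_refl v⟩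
    have l4 := (hsame v').mpr ⟨le_trans h2.1 h2.2, le_refl v'⟩
    have hu : (u : ℕ) = (u' : ℕ) := le_antisymm (Fin.le_def.mp l2.1) (Fin.le_def.mp l1.1)
    have hv : (v : ℕ) = (v' : ℕ) := le_antisymm (Fin.le_def.mp l3.2) (Fin.le_def.mp l4.2)
    omega
  -- wQ0 a is in the same block as a
  have hmem : ∀ a : Fin n, ParabolicRel n I a (wQ0 a) := by
    intro a
    obtain ⟨u, v, iffa, ea⟩ := hwQ0 a
    have h1 := (iffa a).mp (Relation.EqvGen.refl a)
    have hu : (u : ℕ) ≤ (a : ℕ) := Fin.le_def.mp h1.1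
    have hv : (a : ℕ) ≤ (v : ℕ) := Fin.le_def.mp h1.2
    exact (iffa _).mpr ⟨Fin.le_def.mpr (by omega), Fin.le_def.mpr (by omega)⟩
  -- wQ0 is an involution
  have hinv : ∀ a : Fin n, wQ0 (wQ0 a) = a := by
    intro a
    have h1 := hrev a (wQ0 a) (hmem a)
    exact Fin.ext (by omega)
  have hinv' : ∀ a : Fin n, wQ0⁻¹ a = wQ0 a := by
    intro a
    conv_lhs => rw [← hinv a]
    exact Equiv.symm_apply_apply wQ0 (wQ0 a)
  constructor
  · intro hL
    -- key: h ∘ w⁻¹ is strictly decreasing along each block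
    have key : ∀ d (y x : Fin n), (x : ℕ) = (y : ℕ) + (d + 1) →
        ParabolicRel n I y x → h (w⁻¹ x) < h (w⁻¹ y) := by
      intro d
      induction d with
      | zero =>
          intro y x hx hrel
          have hyI : (y : ℕ) ∈ I := parabolic_mem_between hrel le_rfl (by omega)
          exact hL y x hyI (by omega)
      | succ d ih =>
          intro y x hx hrel
          have hzlt : (y : ℕ) + (d + 1) < n := by have := x.isLt; omega
          set z : Fin n := ⟨(y : ℕ) + (d + 1), hzlt⟩ with hz
          have hrelyz : ParabolicRel n I y z := by
            obtain ⟨u, v, iffy, _⟩ := hwQ0 y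
            have h1 := (iffy y).mp (Relation.EqvGen.refl y)
            have h2 := (iffy x).mp hrel
            have hu : (u : ℕ) ≤ (y : ℕ) := Fin.le_def.mp h1.1
            have hv : (x : ℕ) ≤ (v : ℕ) := Fin.le_def.mp h2.2
            exact (iffy z).mpr ⟨Fin.le_def.mpr (by simp [hz]; omega),
              Fin.le_def.mpr (by simp [hz]; omega)⟩
          have hzI : (z : ℕ) ∈ I :=
            parabolic_mem_between hrel (by simp [hz]) (by simp [hz]; omega)
          have step := hL z x hzI (by simp [hz]; omega)
          exact lt_trans step (ih y z rfl hrelyz)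
    refine ⟨?_, ?_⟩
    · intro a b hab heq
      have hwab : (w a : ℕ) < (w b : ℕ) := Fin.lt_def.mp (hwP a b hab heq)
      simp only [Equiv.Perm.mul_apply]
      by_cases hrel : ParabolicRel n I (w a) (w b)
      · exfalso
        have hk := key ((w b : ℕ) - (w a : ℕ) - 1) (w a) (w b) (by omega) hrel
        simp only [Equiv.Perm.inv_def, Equiv.symm_apply_apply] at hk
        omega
      · obtain ⟨u1, v1, iff1, e1⟩ := hwQ0 (w a)
        obtain ⟨u2, v2, iff2, e2⟩ := hwQ0 (w b)
        have m1 := (iff1 (w a)).mp (Relation.EqvGen.refl _)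
        have m2 := (iff2 (w b)).mp (Relation.EqvGen.refl _)
        have m1a : (u1 : ℕ) ≤ (w a : ℕ) := Fin.le_def.mp m1.1
        have m1b : (w a : ℕ) ≤ (v1 : ℕ) := Fin.le_def.mp m1.2
        have m2a : (u2 : ℕ) ≤ (w b : ℕ) := Fin.le_def.mp m2.1
        have m2b : (w b : ℕ) ≤ (v2 : ℕ) := Fin.le_def.mp m2.2
        have hnb : ¬ ((u1 : ℕ) ≤ (w b : ℕ) ∧ (w b : ℕ) ≤ (v1 : ℕ)) := by
          intro hc
          exact hrel ((iff1 _).mpr ⟨Fin.le_def.mpr hc.1, Fin.le_def.mpr hc.2⟩)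
        have hv1lt : (v1 : ℕ) < (w b : ℕ) := by omega
        have hd : (v1 : ℕ) < (u2 : ℕ) := by
          by_contra hle
          have r1 : ParabolicRel n I (w b) v1 :=
            (iff2 v1).mpr ⟨Fin.le_def.mpr (by omega), Fin.le_def.mpr (by omega)⟩
          have r2 : ParabolicRel n I (w a) v1 :=
            (iff1 v1).mpr ⟨Fin.le_def.mpr (by omega), le_refl v1⟩
          exact hrel (Relation.EqvGen.trans _ _ _ r2 (Relation.EqvGen.symm _ _ r1))
        exact Fin.lt_def.mpr (by omega)
    · intro a b hab hrel
      have hab' : (a : ℕ) < (b : ℕ) := Fin.lt_def.mp hab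
      have hy : (wQ0 b : ℕ) < (wQ0 a : ℕ) := by have := hrev a b hrel; omega
      have hrelba : ParabolicRel n I (wQ0 b) (wQ0 a) :=
        Relation.EqvGen.trans _ _ _ (Relation.EqvGen.symm _ _ (hmem b))
          (Relation.EqvGen.trans _ _ _ (Relation.EqvGen.symm _ _ hrel) (hmem a))
      have hk := key ((wQ0 a : ℕ) - (wQ0 b : ℕ) - 1) (wQ0 b) (wQ0 a) (by omega) hrelba
      have goal_eq : ∀ c : Fin n, (wQ0 * w)⁻¹ c = w⁻¹ (wQ0 c) := by
        intro c
        simp [mul_inv_rev, Equiv.Perm.mul_apply, hinv']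
      rw [goal_eq a, goal_eq b]
      by_contra hge
      push_neg at hge
      exact absurd (hmono hge) (not_le.mpr hk)
  · rintro ⟨hA, hB⟩ i j hiI hj
    have hij : ParabolicRel n I i j := Relation.EqvGen.rel i j ⟨hiI, hj⟩
    have hlt : wQ0 j < wQ0 i := by
      have := hrev i j hij
      exact Fin.lt_def.mpr (by omega)
    have hrel' : ParabolicRel n I (wQ0 j) (wQ0 i) :=
      Relation.EqvGen.trans _ _ _ (Relation.EqvGen.symm _ _ (hmem j))
        (Relation.EqvGen.trans _ _ _ (Relation.EqvGen.symm _ _ hij) (hmem i))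
    have h2 := hB (wQ0 j) (wQ0 i) hlt hrel'
    have e : ∀ c : Fin n, (wQ0 * w)⁻¹ (wQ0 c) = w⁻¹ c := by
      intro c
      simp [mul_inv_rev, Equiv.Perm.mul_apply]
    rw [e, e] at h2
    have hle := hmono (le_of_lt h2)
    rcases lt_or_eq_of_le hle with h' | h'
    · exact h'
    · exfalso
      have hji := hwP _ _ h2 h'
      simp only [Equiv.Perm.inv_def, Equiv.apply_symm_apply] at hji
      have := Fin.lt_def.mp hji
      omega
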